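/- With the notation of the extension of a divergence to higher integral forms, the graded Leibniz rule holds: ∇_n(φ·ω) = ∇_{m+n}(φ)·ω + (-1)^{m+n} φ·dω for all φ ∈ I_{m+n+1}A and ω ∈ Ω^m(A). -/
import Mathlib


/-- Graded Leibniz rule for the extension of a divergence to higher
integral forms: `∇_n(φ·ω) = ∇_{m+n}(φ)·ω + (-1)^{m+n} φ·dω` for `φ ∈ I_{m+n+1}A` and
`ω ∈ Ω^m(A)`, evaluated on any `η ∈ Ω^n(A)`. The DGA `Ω(A)` is realized as a grading
`Ω : ℕ → Submodule k W` of an ambient algebra `W` (with `A = Ω⁰`); the extension is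
`∇_n(φ)(ω) = ∇(φ·ω) + (-1)^{n+1} φ(dω)` and `(φ·ω)(ω') = φ(ω ∧ ω')`. -/
theorem extended_divergence_graded_leibniz {k W : Type*} [Field k] [Ring W] [Algebra k W]
    (Ω : ℕ → Submodule k W) (m n : ℕ)
    (hone : (1 : W) ∈ Ω 0)
    (hmul : ∀ {p q : ℕ} {ω η : W}, ω ∈ Ω p → η ∈ Ω q → ω * η ∈ Ω (p + q))
    (d : W → W)
    (hd_add : ∀ ω η : W, d (ω + η) = d ω + d η)
    (hd_deg : ∀ {p : ℕ} {ω : W}, ω ∈ Ω p → d ω ∈ Ω (p + 1))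
    (hd_sq : ∀ ω : W, d (d ω) = 0)
    (hleibniz : ∀ {p : ℕ} (ω η : W), ω ∈ Ω p →
      d (ω * η) = d ω * η + (-1 : W) ^ p * (ω * d η))
    -- φ ∈ I_{m+n+1}A
    (φ : W → W)
    (hφ_deg : ∀ ω ∈ Ω (m + n + 1), φ ω ∈ Ω 0)
    (hφ_add : ∀ ω η : W, φ (ω + η) = φ ω + φ η)
    (hφ_lin : ∀ (ω : W), ∀ a ∈ Ω 0, φ (ω * a) = φ ω * a)
    -- D is a divergence on I₁A
    (D : (W → W) → W)
    (hdiv : ∀ ψ : W → W, (∀ ω η : W, ψ (ω + η) = ψ ω + ψ η) →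
      (∀ (ω : W), ∀ a ∈ Ω 0, ψ (ω * a) = ψ ω * a) →
      ∀ a ∈ Ω 0, D (fun ω => ψ (a * ω)) = D ψ * a + ψ (d a)) :
    ∀ ω ∈ Ω m, ∀ η ∈ Ω n,
      -- ∇_n(φ·ω)(η)
      D (fun ξ => φ (ω * (η * ξ))) + (-1 : W) ^ (n + 1) * φ (ω * d η)
        -- (∇_{m+n}(φ)·ω)(η) + (-1)^{m+n} (φ·dω)(η)
        = (D (fun ξ => φ ((ω * η) * ξ)) + (-1 : W) ^ (m + n + 1) * φ (d (ω * η)))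
          + (-1 : W) ^ (m + n) * φ (d ω * η) := by
  intro ω hω η hη
  have h0 : φ 0 = 0 := by
    have := hφ_add 0 0; simpa using this
  have hneg : ∀ x : W, φ (-x) = -φ x := by
    intro x
    have := hφ_add x (-x)
    simp [h0] at this
    exact eq_neg_of_add_eq_zero_right this.symm
  have hsc : ∀ (p : ℕ) (x : W), φ ((-1 : W) ^ p * x) = (-1 : W) ^ p * φ x := by
    intro p x
    rcases Nat.even_or_odd p with hp | hp
    · rw [hp.neg_one_pow]; simp
    · rw [hp.neg_one_pow]; simp [hneg]
  have hD : (fun ξ => φ (ω * (η * ξ))) = (fun ξ => φ ((ω * η) * ξ)) := by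
    funext ξ; rw [mul_assoc]
  rw [hD, hleibniz ω η hω, hφ_add, hsc]
  set x := φ (ω * d η)
  set y := φ (d ω * η)
  have h1 : (-1 : W) ^ (m + n + 1) * ((-1 : W) ^ m * x) = (-1 : W) ^ (n + 1) * x := by
    rw [← mul_assoc, ← pow_add, show m + n + 1 + m = n + 1 + 2 * m by ring,
      pow_add, pow_mul, neg_one_sq, one_pow, mul_one]
  have h2 : (-1 : W) ^ (m + n + 1) * y + (-1 : W) ^ (m + n) * y = 0 := by
    rw [← add_mul, pow_succ, mul_neg_one, neg_add_cancel, zero_mul]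
  rw [mul_add, h1, ← sub_eq_zero]
  rw [show D (fun ξ => φ (ω * η * ξ)) + (-1 : W) ^ (n + 1) * x -
      (D (fun ξ => φ (ω * η * ξ)) + ((-1 : W) ^ (m + n + 1) * y + (-1 : W) ^ (n + 1) * x) +
        (-1 : W) ^ (m + n) * y)
      = -((-1 : W) ^ (m + n + 1) * y + (-1 : W) ^ (m + n) * y) from by abel, h2, neg_zero]
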